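/- Let (x_j) be a frame in an infinite-dimensional Hilbert space H with all x_j ≠ 0, and let z_j = x_j/‖x_j‖. Then for every finite-dimensional subspace E ⊂ H, sup_j dist(z_j, E) = 1. -/

import Mathlib

open scoped RealInnerProductSpace

set_option maxHeartbeats 1000000

/-- If `(x j)` is a frame in an infinite-dimensional Hilbert space `H` with all `x j ≠ 0`
and `z j = x j / ‖x j‖`, then for every finite-dimensional subspace `E ⊆ H` we have
`sup_j dist(z j, E) = 1`. -/
theorem frame_normalized_sup_dist_finite_dim_eq_one
    {H : Type*} [NormedAddCommGroup H] [InnerProductSpace ℝ H] [CompleteSpace H]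
    (hinf : ¬ FiniteDimensional ℝ H)
    (x : ℕ → H) (A B : ℝ) (hA : 0 < A) (hAB : A ≤ B)
    (hframe : ∀ v : H,
      A * ‖v‖ ^ 2 ≤ ∑' j, ⟪v, x j⟫ ^ 2 ∧ ∑' j, ⟪v, x j⟫ ^ 2 ≤ B * ‖v‖ ^ 2)
    (hx : ∀ j, x j ≠ 0)
    (E : Submodule ℝ H) (hE : FiniteDimensional ℝ E) :
    ⨆ j, Metric.infDist (‖x j‖⁻¹ • x j) (E : Set H) = 1 := by
  classical
  set z : ℕ → H := fun j => ‖x j‖⁻¹ • x j with hzdef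
  have hxn : ∀ j, ‖x j‖ ≠ 0 := fun j => norm_ne_zero_iff.mpr (hx j)
  have hznorm : ∀ j, ‖z j‖ = 1 := by
    intro j
    rw [hzdef]
    simp only [norm_smul, norm_inv, norm_norm]
    exact inv_mul_cancel₀ (hxn j)
  have hle1 : ∀ j, Metric.infDist (z j) (E : Set H) ≤ 1 := by
    intro j
    calc Metric.infDist (z j) (E : Set H) ≤ dist (z j) 0 :=
          Metric.infDist_le_dist_of_mem (by simpa using E.zero_mem)
      _ = 1 := by rw [dist_zero_right, hznorm]
  have hbdd : BddAbove (Set.range fun j => Metric.infDist (z j) (E : Set H)) :=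
    ⟨1, by rintro _ ⟨j, rfl⟩; exact hle1 j⟩
  refine le_antisymm (ciSup_le hle1) ?_
  by_contra hlt
  push_neg at hlt
  set s := ⨆ j, Metric.infDist (z j) (E : Set H) with hs
  have hds : ∀ j, Metric.infDist (z j) (E : Set H) ≤ s := fun j => le_ciSup hbdd j
  have hs0 : 0 ≤ s := le_trans Metric.infDist_nonneg (hds 0)
  have hts : 0 < 1 - s ^ 2 := by nlinarith
  -- summability of the frame coefficients
  have hsummable : ∀ v : H, v ≠ 0 → Summable (fun j => ⟪v, x j⟫ ^ 2) := by
    intro v hv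
    by_contra hns
    have h1 := (hframe v).1
    rw [tsum_eq_zero_of_not_summable hns] at h1
    have h2 : 0 < ‖v‖ ^ 2 := by
      have := norm_pos_iff.mpr hv
      positivity
    nlinarith
  -- orthogonal projection facts
  haveI : CompleteSpace E := FiniteDimensional.complete ℝ E
  have hdist : ∀ j, Metric.infDist (z j) (E : Set H)
      = ‖z j - (E.orthogonalProjectionOnto (z j) : H)‖ := by
    intro j
    rw [Metric.infDist_eq_iInf, ← Submodule.starProjection_apply, Submodule.starProjection_minimal]
    congr 1
    ext y
    rw [dist_eq_norm]
  -- the projection on E of z j has norm² ≥ 1 - s²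
  have hproj : ∀ j, 1 - s ^ 2 ≤ ‖E.orthogonalProjectionOnto (z j)‖ ^ 2 := by
    intro j
    have hpyth := Submodule.norm_sq_eq_add_norm_sq_projection (z j) E
    have horth : ‖(Eᗮ.orthogonalProjectionOnto (z j) : H)‖ ≤ s := by
      rw [← Submodule.starProjection_apply, Submodule.starProjection_orthogonal_val (K := E) (z j), Submodule.starProjection_apply, ← hdist j]
      exact hds j
    have h1 : ‖(Eᗮ.orthogonalProjectionOnto (z j))‖ ^ 2 ≤ s ^ 2 := by
      rw [← Submodule.norm_coe]
      have := norm_nonneg (Eᗮ.orthogonalProjectionOnto (z j) : H)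
      nlinarith
    rw [hznorm j, one_pow] at hpyth
    linarith
  -- orthonormal basis of E
  set d := Module.finrank ℝ E with hd
  set b : OrthonormalBasis (Fin d) ℝ E := stdOrthonormalBasis ℝ E with hb
  have hbnorm : ∀ i, ‖((b i : E) : H)‖ = 1 := by
    intro i
    rw [Submodule.norm_coe]
    exact b.orthonormal.1 i
  have hbne : ∀ i, ((b i : E) : H) ≠ 0 := by
    intro i h
    have := hbnorm i
    rw [h, norm_zero] at this
    norm_num at this
  -- ∑ i, ⟪b i, w⟫² = ‖P_E w‖²
  have hsum_inner : ∀ w : H,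
      ∑ i, ⟪((b i : E) : H), w⟫ ^ 2 = ‖E.orthogonalProjectionOnto w‖ ^ 2 := by
    intro w
    have h1 : ∀ i, ⟪((b i : E) : H), w⟫ = ⟪b i, E.orthogonalProjectionOnto w⟫ := by
      intro i
      rw [Submodule.inner_orthogonalProjectionOnto_eq_of_mem_left]
    calc ∑ i, ⟪((b i : E) : H), w⟫ ^ 2
        = ∑ i, ⟪E.orthogonalProjectionOnto w, b i⟫ * ⟪b i, E.orthogonalProjectionOnto w⟫ := by
          refine Finset.sum_congr rfl fun i _ => ?_
          rw [h1 i, sq, real_inner_comm]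
      _ = ⟪E.orthogonalProjectionOnto w, E.orthogonalProjectionOnto w⟫ :=
          b.sum_inner_mul_inner _ _
      _ = ‖E.orthogonalProjectionOnto w‖ ^ 2 := real_inner_self_eq_norm_sq _
  -- key inequality
  have hkey : ∀ j, ‖x j‖ ^ 2 * (1 - s ^ 2) ≤ ∑ i, ⟪((b i : E) : H), x j⟫ ^ 2 := by
    intro j
    have hx' : x j = ‖x j‖ • z j := by
      rw [hzdef]; rw [smul_smul, mul_inv_cancel₀ (hxn j), one_smul]
    have h1 : ∀ v : H, ⟪v, x j⟫ ^ 2 = ‖x j‖ ^ 2 * ⟪v, z j⟫ ^ 2 := by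
      intro v
      conv_lhs => rw [hx', real_inner_smul_right]
      ring
    calc ‖x j‖ ^ 2 * (1 - s ^ 2) ≤ ‖x j‖ ^ 2 * ‖E.orthogonalProjectionOnto (z j)‖ ^ 2 := by
          have := hproj j
          have h2 : (0:ℝ) ≤ ‖x j‖ ^ 2 := by positivity
          nlinarith
      _ = ‖x j‖ ^ 2 * ∑ i, ⟪((b i : E) : H), z j⟫ ^ 2 := by rw [hsum_inner]
      _ = ∑ i, ⟪((b i : E) : H), x j⟫ ^ 2 := by
          rw [Finset.mul_sum]
          exact Finset.sum_congr rfl fun i _ => (h1 _).symm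
  -- summability of ‖x j‖²
  have hSsum : Summable (fun j => ∑ i, ⟪((b i : E) : H), x j⟫ ^ 2) :=
    summable_sum fun i _ => hsummable _ (hbne i)
  have hsum2 : Summable (fun j => ‖x j‖ ^ 2) := by
    have h1 : Summable (fun j => ‖x j‖ ^ 2 * (1 - s ^ 2)) :=
      Summable.of_nonneg_of_le (fun j => by positivity) hkey hSsum
    exact (summable_mul_right_iff hts.ne').mp h1
  -- choose a tail with small sum
  have htail : ∀ᶠ N in Filter.atTop, ∑' j, ‖x (j + N)‖ ^ 2 < A := by
    have := tendsto_sum_nat_add (fun j => ‖x j‖ ^ 2)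
    exact this.eventually (gt_mem_nhds hA)
  obtain ⟨N, hN⟩ := htail.exists
  -- find a unit vector orthogonal to x 0, ..., x (N-1)
  set F := Submodule.span ℝ (Set.range fun i : Fin N => x i) with hF
  haveI : FiniteDimensional ℝ F := FiniteDimensional.span_of_finite ℝ (Set.finite_range _)
  haveI : CompleteSpace F := FiniteDimensional.complete ℝ F
  have hFne : F ≠ ⊤ := by
    intro h
    haveI : FiniteDimensional ℝ (⊤ : Submodule ℝ H) := h ▸ (inferInstance : FiniteDimensional ℝ F)
    exact hinf ((Submodule.topEquiv (R := ℝ) (M := H)).finiteDimensional)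
  have hForth : Fᗮ ≠ ⊥ := fun h => hFne (Submodule.orthogonal_eq_bot_iff.mp h)
  obtain ⟨v, hvF, hv⟩ := Submodule.ne_bot_iff _ |>.mp hForth
  have hvx : ∀ j < N, ⟪v, x j⟫ = 0 := by
    intro j hj
    have hxF : x j ∈ F := Submodule.subset_span ⟨⟨j, hj⟩, rfl⟩
    exact real_inner_comm (x j) v ▸ (Submodule.mem_orthogonal F v).mp hvF (x j) hxF
  -- derive the contradiction
  have hsv := hsummable v hv
  have htsum : ∑' j, ⟪v, x j⟫ ^ 2 = ∑' j, ⟪v, x (j + N)⟫ ^ 2 := by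
    rw [← Summable.sum_add_tsum_nat_add N hsv]
    rw [Finset.sum_eq_zero fun j hj => by
      rw [hvx j (Finset.mem_range.mp hj), zero_pow two_ne_zero], zero_add]
  have hCS : ∀ j, ⟪v, x (j + N)⟫ ^ 2 ≤ ‖v‖ ^ 2 * ‖x (j + N)‖ ^ 2 := by
    intro j
    have h1 := abs_real_inner_le_norm v (x (j + N))
    have h2 := abs_nonneg ⟪v, x (j + N)⟫
    have h3 : ⟪v, x (j + N)⟫ ^ 2 = |⟪v, x (j + N)⟫| ^ 2 := (sq_abs _).symm
    nlinarith [norm_nonneg v, norm_nonneg (x (j + N))]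
  have hsum3 : Summable (fun j => ‖v‖ ^ 2 * ‖x (j + N)‖ ^ 2) :=
    Summable.mul_left (‖v‖ ^ 2) ((summable_nat_add_iff N).mpr hsum2)
  have hlt2 : ∑' j, ⟪v, x (j + N)⟫ ^ 2 < A * ‖v‖ ^ 2 := by
    calc ∑' j, ⟪v, x (j + N)⟫ ^ 2 ≤ ∑' j, ‖v‖ ^ 2 * ‖x (j + N)‖ ^ 2 :=
          Summable.tsum_le_tsum hCS ((summable_nat_add_iff N).mpr hsv) hsum3
      _ = ‖v‖ ^ 2 * ∑' j, ‖x (j + N)‖ ^ 2 := tsum_mul_left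
      _ < ‖v‖ ^ 2 * A := by
          have h1 : 0 < ‖v‖ ^ 2 := by
            have := norm_pos_iff.mpr hv
            positivity
          exact (mul_lt_mul_iff_right₀ h1).mpr hN
      _ = A * ‖v‖ ^ 2 := mul_comm _ _
  have := (hframe v).1
  rw [htsum] at this
  exact absurd (lt_of_le_of_lt this hlt2) (lt_irrefl _)
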